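/- Define S_{C1,C2}(x) = Σ_{m,n≥0} q^{2·C(m+1,2)+C(n+1,2)+mn+C1·m+C2·n} x^{2m+n} / ((q;q)_m (q;q)_n). Then S_{0,0}(x) = (1+x²q²) S_{0,0}(xq) + (xq+x²q³) S_{1,0}(xq) and S_{1,0}(x) = S_{0,0}(xq) + (xq+x²q³) S_{1,0}(xq). -/

import Mathlib

noncomputable section

/-- Base coefficient ring: formal Laurent series over ℚ (a field), so that
integer powers of `q` and inverses of Pochhammer symbols make sense. -/
abbrev R : Type := LaurentSeries ℚ

/-- The formal variable `q`. -/
def q : R := HahnSeries.single 1 1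

/-- The finite q-Pochhammer symbol `(a; b)_n = ∏_{j=1}^n (1 - a b^(j-1))`. -/
def poch (a b : R) (n : ℕ) : R := ∏ j ∈ Finset.range n, (1 - a * b ^ j)

/-- Formal substitution `x ↦ c·x` in a power series in `x` over `R`. -/
def subst (c : R) (f : PowerSeries R) : PowerSeries R :=
  PowerSeries.mk fun k => c ^ k * PowerSeries.coeff k f

/-- `S_{C1,C2}(x) = Σ_{m,n} q^{2C(m+1,2)+C(n+1,2)+mn+C1 m+C2 n} x^{{2m+n}}
/((q;q)_m (q;q)_n)`, as a power series in `x` over `R`. -/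
def S (C1 C2 : ℤ) : PowerSeries R :=
  PowerSeries.mk fun k =>
    ∑ p ∈ (Finset.range (k+1) ×ˢ Finset.range (k+1)).filter
        (fun p => 2 * p.1 + p.2 = k),
      q ^ (2 * ((p.1+1).choose 2 : ℤ) + ((p.2+1).choose 2 : ℤ)
            + (p.1 : ℤ) * (p.2 : ℤ) + C1 * (p.1 : ℤ) + C2 * (p.2 : ℤ))
        * (poch q q p.1)⁻¹ * (poch q q p.2)⁻¹

lemma q_ne_zero : q ≠ 0 := by
  simpa [q] using HahnSeries.single_ne_zero (one_ne_zero (α := ℚ))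

lemma q_pow (n : ℕ) : q ^ n = HahnSeries.single (n : ℤ) (1 : ℚ) := by
  simp [q, HahnSeries.single_pow]

lemma one_sub_q_pow_ne_zero (n : ℕ) : (1 : R) - q ^ (n + 1) ≠ 0 := by
  intro h
  have h0 := congrArg (fun f : R => f.coeff 0) h
  simp only [q_pow, HahnSeries.coeff_single, HahnSeries.coeff_sub, HahnSeries.coeff_one] at h0
  rw [if_pos trivial, if_neg (by push_cast; omega : ¬((0:ℤ) = ((n+1:ℕ):ℤ)))] at h0
  simp at h0

lemma poch_ne_zero (n : ℕ) : poch q q n ≠ 0 := by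
  unfold poch
  refine Finset.prod_ne_zero_iff.mpr fun j _ => ?_
  have := one_sub_q_pow_ne_zero j
  rw [pow_succ'] at this
  exact this

lemma poch_succ (n : ℕ) : poch q q (n + 1) = poch q q n * (1 - q ^ (n + 1)) := by
  rw [poch, Finset.prod_range_succ, ← pow_succ']
  rfl

lemma inv_poch_succ (n : ℕ) : (poch q q (n+1))⁻¹ = (poch q q n)⁻¹ * (1 - q^(n+1))⁻¹ := by
  rw [poch_succ, mul_inv]

/-- exponent -/
def E (C1 C2 : ℤ) (m n : ℕ) : ℤ :=
  2 * ((m+1).choose 2 : ℤ) + ((n+1).choose 2 : ℤ) + (m:ℤ)*(n:ℤ) + C1*(m:ℤ) + C2*(n:ℤ)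

def term (C1 C2 : ℤ) (m n : ℕ) : R :=
  q ^ (E C1 C2 m n) * (poch q q m)⁻¹ * (poch q q n)⁻¹

def D (k : ℕ) : Finset (ℕ × ℕ) :=
  (Finset.range (k+1) ×ˢ Finset.range (k+1)).filter (fun p => 2*p.1+p.2 = k)

lemma coeff_S (C1 C2 : ℤ) (k : ℕ) :
    PowerSeries.coeff k (S C1 C2) = ∑ p ∈ D k, term C1 C2 p.1 p.2 := by
  simp [S, D, term, E, PowerSeries.coeff_mk]

lemma cho (n : ℕ) : ((n+1).choose 2 : ℤ) = (n.choose 2 : ℤ) + n := by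
  rw [Nat.choose_succ_succ]
  push_cast [Nat.choose_one_right]
  ring

lemma term_n_shift (C1 C2 : ℤ) (m n : ℕ) :
    term C1 C2 m (n+1) - term C1 (C2+1) m (n+1)
      = q ^ (C2+1) * term (C1+1) (C2+1) m n := by
  have hE : E C1 C2 m (n+1) = (C2+1) + E (C1+1) (C2+1) m n := by
    unfold E
    rw [show n+1+1 = (n+1)+1 from rfl, cho (n+1)]
    push_cast
    ring
  have hE2 : E C1 (C2+1) m (n+1) = E C1 C2 m (n+1) + ((n+1 : ℕ) : ℤ) := by
    unfold E; push_cast; ring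
  unfold term
  rw [inv_poch_succ, hE2, hE]
  rw [show (q:R) ^ ((C2+1) + E (C1+1) (C2+1) m n + ((n+1:ℕ):ℤ))
      = q^(C2+1) * q^(E (C1+1) (C2+1) m n) * q^(n+1) by
    rw [zpow_add₀ q_ne_zero, zpow_add₀ q_ne_zero, zpow_natCast]]
  rw [show (q:R) ^ ((C2+1) + E (C1+1) (C2+1) m n)
      = q^(C2+1) * q^(E (C1+1) (C2+1) m n) from zpow_add₀ q_ne_zero _ _]
  have hw : (1 - q^(n+1)) * (1 - q^(n+1))⁻¹ = 1 := mul_inv_cancel₀ (one_sub_q_pow_ne_zero n)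
  linear_combination (q ^ ((C2:ℤ)+1) * q ^ (E (C1+1) (C2+1) m n) *
    (poch q q m)⁻¹ * (poch q q n)⁻¹) * hw

lemma term_m_shift (C1 C2 : ℤ) (m n : ℕ) :
    term C1 C2 (m+1) n - term (C1+1) C2 (m+1) n
      = q ^ (C1+2) * term (C1+2) (C2+1) m n := by
  have hE : E C1 C2 (m+1) n = (C1+2) + E (C1+2) (C2+1) m n := by
    unfold E
    rw [show m+1+1 = (m+1)+1 from rfl, cho (m+1)]
    push_cast
    ring
  have hE2 : E (C1+1) C2 (m+1) n = E C1 C2 (m+1) n + ((m+1 : ℕ) : ℤ) := by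
    unfold E; push_cast; ring
  unfold term
  rw [inv_poch_succ, hE2, hE]
  rw [show (q:R) ^ ((C1+2) + E (C1+2) (C2+1) m n + ((m+1:ℕ):ℤ))
      = q^(C1+2) * q^(E (C1+2) (C2+1) m n) * q^(m+1) by
    rw [zpow_add₀ q_ne_zero, zpow_add₀ q_ne_zero, zpow_natCast]]
  rw [show (q:R) ^ ((C1+2) + E (C1+2) (C2+1) m n)
      = q^(C1+2) * q^(E (C1+2) (C2+1) m n) from zpow_add₀ q_ne_zero _ _]
  have hw : (1 - q^(m+1)) * (1 - q^(m+1))⁻¹ = 1 := mul_inv_cancel₀ (one_sub_q_pow_ne_zero m)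
  linear_combination (q ^ ((C1:ℤ)+2) * q ^ (E (C1+2) (C2+1) m n) *
    (poch q q m)⁻¹ * (poch q q n)⁻¹) * hw

lemma term_subst (C1 C2 : ℤ) (m n k : ℕ) (h : 2*m+n = k) :
    q ^ k * term C1 C2 m n = term (C1+2) (C2+1) m n := by
  have hE : E (C1+2) (C2+1) m n = (k:ℤ) + E C1 C2 m n := by
    unfold E; push_cast [← h]; ring
  unfold term
  rw [hE, zpow_add₀ q_ne_zero, zpow_natCast]
  ring

lemma subst_S (C1 C2 : ℤ) : subst q (S C1 C2) = S (C1+2) (C2+1) := by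
  refine PowerSeries.ext fun k => ?_
  rw [subst, PowerSeries.coeff_mk, coeff_S, coeff_S, Finset.mul_sum]
  refine Finset.sum_congr rfl fun p hp => ?_
  simp only [D, Finset.mem_filter] at hp
  exact term_subst C1 C2 p.1 p.2 k hp.2

lemma term_C2_indep (C1 C2 C2' : ℤ) (m : ℕ) : term C1 C2 m 0 = term C1 C2' m 0 := by
  unfold term E; norm_num

lemma term_C1_indep (C1 C1' C2 : ℤ) (n : ℕ) : term C1 C2 0 n = term C1' C2 0 n := by
  unfold term E; norm_num

lemma mem_D {k : ℕ} {p : ℕ × ℕ} : p ∈ D k ↔ p.1 ≤ k ∧ p.2 ≤ k ∧ 2*p.1 + p.2 = k := by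
  simp only [D, Finset.mem_filter, Finset.mem_product, Finset.mem_range]
  omega

lemma shift_n (C1 C2 : ℤ) :
    S C1 C2 = S C1 (C2+1)
      + PowerSeries.X * PowerSeries.C (q^(C2+1)) * S (C1+1) (C2+1) := by
  refine PowerSeries.ext fun k => ?_
  rw [map_add, mul_assoc, coeff_S]
  match k with
  | 0 =>
    rw [PowerSeries.coeff_zero_X_mul, add_zero, coeff_S]
    refine Finset.sum_congr rfl fun p hp => ?_
    have h2 : p.2 = 0 := by rw [mem_D] at hp; omega
    rw [h2, term_C2_indep]
  | j+1 =>
    rw [PowerSeries.coeff_succ_X_mul, PowerSeries.coeff_C_mul, coeff_S, coeff_S,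
      Finset.mul_sum, ← sub_eq_iff_eq_add', ← Finset.sum_sub_distrib]
    have hzero : ∀ p ∈ D (j+1),
        term C1 C2 p.1 p.2 - term C1 (C2+1) p.1 p.2 ≠ 0 → p.2 ≠ 0 := by
      intro p _ hne h0
      exact hne (by rw [h0, term_C2_indep, sub_self])
    rw [← Finset.sum_filter_of_ne hzero]
    refine (Finset.sum_nbij' (fun p : ℕ × ℕ => (p.1, p.2+1))
      (fun p : ℕ × ℕ => (p.1, p.2-1)) ?_ ?_ ?_ ?_ ?_).symm
    · intro a ha
      rw [mem_D] at ha
      simp only [Finset.mem_filter, mem_D]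
      omega
    · intro b hb
      simp only [Finset.mem_filter, mem_D] at hb
      rw [mem_D]
      omega
    · intro a _; rfl
    · intro b hb
      simp only [Finset.mem_filter, mem_D] at hb
      have : b.2 - 1 + 1 = b.2 := by omega
      exact Prod.ext rfl this
    · intro a _
      exact (term_n_shift C1 C2 a.1 a.2).symm

lemma shift_m (C1 C2 : ℤ) :
    S C1 C2 = S (C1+1) C2
      + PowerSeries.X^2 * PowerSeries.C (q^(C1+2)) * S (C1+2) (C2+1) := by
  refine PowerSeries.ext fun k => ?_
  rw [map_add, pow_two, mul_assoc, mul_assoc, coeff_S]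
  match k with
  | 0 =>
    rw [PowerSeries.coeff_zero_X_mul, add_zero, coeff_S]
    refine Finset.sum_congr rfl fun p hp => ?_
    have h1 : p.1 = 0 := by rw [mem_D] at hp; omega
    rw [h1, term_C1_indep]
  | 1 =>
    rw [PowerSeries.coeff_succ_X_mul, PowerSeries.coeff_zero_X_mul, add_zero, coeff_S]
    refine Finset.sum_congr rfl fun p hp => ?_
    have h1 : p.1 = 0 := by rw [mem_D] at hp; omega
    rw [h1, term_C1_indep]
  | j+2 =>
    rw [PowerSeries.coeff_succ_X_mul, PowerSeries.coeff_succ_X_mul,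
      PowerSeries.coeff_C_mul, coeff_S, coeff_S,
      Finset.mul_sum, ← sub_eq_iff_eq_add', ← Finset.sum_sub_distrib]
    have hzero : ∀ p ∈ D (j+2),
        term C1 C2 p.1 p.2 - term (C1+1) C2 p.1 p.2 ≠ 0 → p.1 ≠ 0 := by
      intro p _ hne h0
      exact hne (by rw [h0, term_C1_indep, sub_self])
    rw [← Finset.sum_filter_of_ne hzero]
    refine (Finset.sum_nbij' (fun p : ℕ × ℕ => (p.1+1, p.2))
      (fun p : ℕ × ℕ => (p.1-1, p.2)) ?_ ?_ ?_ ?_ ?_).symm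
    · intro a ha
      rw [mem_D] at ha
      simp only [Finset.mem_filter, mem_D]
      omega
    · intro b hb
      simp only [Finset.mem_filter, mem_D] at hb
      rw [mem_D]
      omega
    · intro a _; rfl
    · intro b hb
      simp only [Finset.mem_filter, mem_D] at hb
      have : b.1 - 1 + 1 = b.1 := by omega
      exact Prod.ext this rfl
    · intro a _
      exact (term_m_shift C1 C2 a.1 a.2).symm


open PowerSeries

theorem functional_equation_system :
    S 0 0 = (1 + PowerSeries.X ^ 2 * PowerSeries.C (q ^ 2)) * _root_.subst q (S 0 0)
        + (PowerSeries.X * PowerSeries.C q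
            + PowerSeries.X ^ 2 * PowerSeries.C (q ^ 3)) * _root_.subst q (S 1 0) ∧
    S 1 0 = _root_.subst q (S 0 0)
        + (PowerSeries.X * PowerSeries.C q
            + PowerSeries.X ^ 2 * PowerSeries.C (q ^ 3)) * _root_.subst q (S 1 0) := by
  have hsub0 : subst q (S 0 0) = S 2 1 := by simpa using subst_S 0 0
  have hsub1 : subst q (S 1 0) = S 3 1 := by simpa using subst_S 1 0
  rw [hsub0, hsub1]
  have h1 := shift_m 0 0
  have h2 := shift_n 1 0
  have h3 := shift_m 1 1
  have h4 := shift_m 2 1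
  have h5 := shift_n 3 1
  norm_num [zpow_ofNat, zpow_one] at h1 h2 h3 h4 h5
  simp only [map_pow] at h1 h2 h3 h4 h5 ⊢
  have eq2 : S 1 0 = S 2 1 + (X * C q + X^2 * (C q)^3) * S 3 1 := by
    linear_combination h2 + h3 + (X * C q) * h4 - (X^2 * (C q)^3) * h5
  exact ⟨by linear_combination h1 + eq2, eq2⟩
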